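/- The set of points (x, y) ∈ S⁶ × S⁵ satisfying x₁ = x₂ = x₃ = 0, y₁·x₄ = y₁·x₅ = y₁·x₆ = 0, and y₂ = y₃ = y₄ = y₅ = y₆ = 0 has exactly four elements, namely the points with x₁ = ⋯ = x₆ = 0, x₇ = ±1, y₂ = ⋯ = y₆ = 0, y₁ = ±1. (This is the transverse intersection count establishing that the characteristic number ∫ a³b⁸ of the manifold X₁₁ = (S⁶ × S⁵)/(ℤ/2 × ℤ/2) equals 1 mod 2.) -/
import Mathlib


open scoped BigOperators

/-- `S⁶ × S⁵`: the set of pairs `(x, y)` with `x ∈ ℝ⁷`, `y ∈ ℝ⁶`, `‖x‖ = 1`, `‖y‖ = 1`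
(written via sums of squares).  Coordinates: `x₁,…,x₇` are `p.1 0,…,p.1 6` and
`y₁,…,y₆` are `p.2 0,…,p.2 5`. -/
def sphereProd : Set ((Fin 7 → ℝ) × (Fin 6 → ℝ)) :=
  {p | (∑ i, p.1 i ^ 2) = 1 ∧ (∑ j, p.2 j ^ 2) = 1}

/-- The intersection locus: points of `S⁶ × S⁵` with
`x₁ = x₂ = x₃ = 0`, `y₁·x₄ = y₁·x₅ = y₁·x₆ = 0` and `y₂ = ⋯ = y₆ = 0`. -/
def intersectionLocus : Set ((Fin 7 → ℝ) × (Fin 6 → ℝ)) :=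
  {p | p ∈ sphereProd ∧
    p.1 0 = 0 ∧ p.1 1 = 0 ∧ p.1 2 = 0 ∧
    p.2 0 * p.1 3 = 0 ∧ p.2 0 * p.1 4 = 0 ∧ p.2 0 * p.1 5 = 0 ∧
    p.2 1 = 0 ∧ p.2 2 = 0 ∧ p.2 3 = 0 ∧ p.2 4 = 0 ∧ p.2 5 = 0}

/-- The point with `x₁ = ⋯ = x₆ = 0`, `x₇ = s`, `y₂ = ⋯ = y₆ = 0`, `y₁ = t`. -/
def pt (s t : ℝ) : (Fin 7 → ℝ) × (Fin 6 → ℝ) :=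
  (fun i => if i = 6 then s else 0, fun j => if j = 0 then t else 0)

lemma pt_inj {s t s' t' : ℝ} (h : pt s t = pt s' t') : s = s' ∧ t = t' := by
  constructor
  · have := congrFun (congrArg Prod.fst h) 6
    simpa [pt] using this
  · have := congrFun (congrArg Prod.snd h) 0
    simpa [pt] using this

lemma pt_mem (s t : ℝ) (hs : s = 1 ∨ s = -1) (ht : t = 1 ∨ t = -1) :
    pt s t ∈ intersectionLocus := by
  rcases hs with rfl | rfl <;> rcases ht with rfl | rfl <;>
    simp [intersectionLocus, sphereProd, pt, Fin.sum_univ_seven, Fin.sum_univ_six]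

/-- The intersection locus consists exactly of the four points with
`x₇ = ±1`, `y₁ = ±1` and all other coordinates zero; in particular it has
exactly four elements. -/
theorem intersectionLocus_eq_four_points :
    intersectionLocus = {pt 1 1, pt 1 (-1), pt (-1) 1, pt (-1) (-1)} ∧
    intersectionLocus.ncard = 4 := by
  have heq : intersectionLocus = {pt 1 1, pt 1 (-1), pt (-1) 1, pt (-1) (-1)} := by
    ext p
    constructor
    · rintro ⟨⟨hx, hy⟩, h1, h2, h3, h4, h5, h6, h7, h8, h9, h10, h11⟩
      rw [Fin.sum_univ_six] at hy
      rw [Fin.sum_univ_seven] at hx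
      simp only [h1, h2, h3, h7, h8, h9, h10, h11] at hx hy
      norm_num at hy
      -- hy : p.2 0 ^ 2 = 1
      have hy0 : p.2 0 ≠ 0 := by
        intro h; rw [h] at hy; norm_num at hy
      have e4 : p.1 3 = 0 := by
        rcases mul_eq_zero.mp h4 with h | h; exact absurd h hy0; exact h
      have e5 : p.1 4 = 0 := by
        rcases mul_eq_zero.mp h5 with h | h; exact absurd h hy0; exact h
      have e6 : p.1 5 = 0 := by
        rcases mul_eq_zero.mp h6 with h | h; exact absurd h hy0; exact h
      simp only [e4, e5, e6] at hx
      norm_num at hx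
      -- hx : p.1 6 ^ 2 = 1
      have hp : p = pt (p.1 6) (p.2 0) := by
        refine Prod.ext ?_ ?_
        · funext i; fin_cases i <;> simp [pt, h1, h2, h3, e4, e5, e6]
        · funext j; fin_cases j <;> simp [pt, h7, h8, h9, h10, h11]
      rcases hx with hx6 | hx6 <;> rcases hy with hy0' | hy0' <;>
        rw [hx6, hy0'] at hp <;> rw [hp] <;>
        simp only [Set.mem_insert_iff, Set.mem_singleton_iff] <;> tauto
    · intro hp
      simp only [Set.mem_insert_iff, Set.mem_singleton_iff] at hp
      rcases hp with h | h | h | h <;> rw [h]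
      · exact pt_mem 1 1 (Or.inl rfl) (Or.inl rfl)
      · exact pt_mem 1 (-1) (Or.inl rfl) (Or.inr rfl)
      · exact pt_mem (-1) 1 (Or.inr rfl) (Or.inl rfl)
      · exact pt_mem (-1) (-1) (Or.inr rfl) (Or.inr rfl)
  refine ⟨heq, ?_⟩
  have ne1 : (1:ℝ) ≠ -1 := by norm_num
  have d1 : pt 1 1 ≠ pt 1 (-1) := fun h => ne1 (pt_inj h).2
  have d2 : pt 1 1 ≠ pt (-1) 1 := fun h => ne1 (pt_inj h).1
  have d3 : pt 1 1 ≠ pt (-1) (-1) := fun h => ne1 (pt_inj h).1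
  have d4 : pt 1 (-1) ≠ pt (-1) 1 := fun h => ne1 (pt_inj h).1
  have d5 : pt 1 (-1) ≠ pt (-1) (-1) := fun h => ne1 (pt_inj h).1
  have d6 : pt (-1) 1 ≠ pt (-1) (-1) := fun h => ne1 (pt_inj h).2
  rw [heq, Set.ncard_insert_of_notMem (by simp [d1, d2, d3]) (Set.toFinite _),
    Set.ncard_insert_of_notMem (by simp [d4, d5]) (Set.toFinite _),
    Set.ncard_pair d6]
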